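/- Let X be a Noetherian topological space, V an open subset, and {F_i}_{i∈I} a filtered inductive system of sheaves of k-modules on X. Then colim_i Γ(V; F_i) ≅ Γ(V; colim_i F_i), where the colimit on the right is taken in the category of sheaves. -/

import Mathlib

open Set

/-- `RWQC V U` : the open set `V` is relatively weakly quasi-compact in `U`, i.e. every
open covering of `U` admits a finite subfamily covering `V`. -/
def RWQC {X : Type*} [TopologicalSpace X] (V U : Set X) : Prop :=
  ∀ 𝒰 : Set (Set X), (∀ W ∈ 𝒰, IsOpen W) → U ⊆ ⋃₀ 𝒰 →
    ∃ 𝒱 ⊆ 𝒰, 𝒱.Finite ∧ V ⊆ ⋃₀ 𝒱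

/-- A topological space is locally weakly quasi-compact if it satisfies LWC1-LWC3. -/
structure LocallyWeaklyQuasiCompact (X : Type*) [TopologicalSpace X] : Prop where
  lwc1 : ∀ U : Set X, IsOpen U → ∀ x ∈ U, ∀ N ∈ nhds x,
    ∃ V : Set X, IsOpen V ∧ x ∈ V ∧ V ⊆ N ∧ RWQC V U
  lwc2 : ∀ U V U' V' : Set X, IsOpen U → IsOpen V → IsOpen U' → IsOpen V' →
    RWQC U' U → RWQC V' V → RWQC (U' ∩ V') (U ∩ V)
  lwc3 : ∀ U U' : Set X, IsOpen U → IsOpen U' → RWQC U' U →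
    ∃ W : Set X, IsOpen W ∧ RWQC U' W ∧ RWQC W U

open CategoryTheory CategoryTheory.Limits TopologicalSpace Opposite

set_option linter.unusedSectionVars false

namespace Stmt9Aux

variable {k : Type} [CommRing k] {X : Type} [TopologicalSpace X]
  {I : Type} [SmallCategory I] [IsFiltered I]
  (F : I ⥤ Sheaf (Opens.grothendieckTopology X) (ModuleCat k))

/-- The underlying presheaf diagram. -/
abbrev Fp : I ⥤ (Opens X)ᵒᵖ ⥤ ModuleCat k :=
  F ⋙ sheafToPresheaf (Opens.grothendieckTopology X) (ModuleCat k)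

/-- The presheaf colimit. -/
noncomputable abbrev P : (Opens X)ᵒᵖ ⥤ ModuleCat k := colimit (Fp F)

noncomputable abbrev ιapp (i : I) (W : Opens X) :
    (F.obj i).val.obj (op W) ⟶ (P F).obj (op W) :=
  (colimit.ι (Fp F) i).app (op W)

noncomputable def coconeAt (W : Opens X) :
    Cocone (Fp F ⋙ (evaluation (Opens X)ᵒᵖ (ModuleCat k)).obj (op W)) :=
  ((evaluation (Opens X)ᵒᵖ (ModuleCat k)).obj (op W)).mapCocone (colimit.cocone (Fp F))

noncomputable def coconeAtIsColimit (W : Opens X) : IsColimit (coconeAt F W) :=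
  isColimitOfPreserves _ (colimit.isColimit _)

lemma exists_rep (W : Opens X) (x : (P F).obj (op W)) :
    ∃ (i : I) (y : (F.obj i).val.obj (op W)), ιapp F i W y = x :=
  Concrete.isColimit_exists_rep _ (coconeAtIsColimit F W) x

lemma map_comp_app_apply {i j m : I} (f : i ⟶ j) (u : j ⟶ m) (W : Opens X)
    (z : (F.obj i).val.obj (op W)) :
    ((Fp F).map (f ≫ u)).app (op W) z
      = ((Fp F).map u).app (op W) (((Fp F).map f).app (op W) z) := by
  rw [Functor.map_comp, NatTrans.comp_app]; rfl

lemma ιapp_push {i j : I} (f : i ⟶ j) (W : Opens X) (x : (F.obj i).val.obj (op W)) :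
    ιapp F j W (((Fp F).map f).app (op W) x) = ιapp F i W x := by
  have h := NatTrans.congr_app (colimit.w (Fp F) f) (op W)
  exact ConcreteCategory.congr_hom h x

lemma ιapp_natural (i : I) {W' W : Opens X} (h : W' ⟶ W) (x : (F.obj i).val.obj (op W)) :
    (P F).map h.op (ιapp F i W x) = ιapp F i W' ((F.obj i).val.map h.op x) := by
  exact (ConcreteCategory.congr_hom ((colimit.ι (Fp F) i).naturality h.op) x).symm

lemma exists_eq (i : I) (W : Opens X) (x y : (F.obj i).val.obj (op W))
    (h : ιapp F i W x = ιapp F i W y) :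
    ∃ (j : I) (f : i ⟶ j),
      ((Fp F).map f).app (op W) x = ((Fp F).map f).app (op W) y := by
  obtain ⟨j, f, g, hfg⟩ :=
    Concrete.isColimit_exists_of_rep_eq _ (coconeAtIsColimit F W) x y h
  refine ⟨IsFiltered.coeq f g, f ≫ IsFiltered.coeqHom f g, ?_⟩
  have hfg' : ((Fp F).map f).app (op W) x = ((Fp F).map g).app (op W) y := hfg
  rw [map_comp_app_apply, hfg', ← map_comp_app_apply, ← IsFiltered.coeq_condition,
    map_comp_app_apply, ← map_comp_app_apply]


lemma exists_eq_finset {L : Type} (s : Finset L) (i : I) (Wl : L → Opens X)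
    (x y : ∀ l, (F.obj i).val.obj (op (Wl l)))
    (h : ∀ l ∈ s, ιapp F i (Wl l) (x l) = ιapp F i (Wl l) (y l)) :
    ∃ (j : I) (f : i ⟶ j), ∀ l ∈ s,
      ((Fp F).map f).app (op (Wl l)) (x l) = ((Fp F).map f).app (op (Wl l)) (y l) := by
  classical
  induction s using Finset.induction with
  | empty => exact ⟨i, 𝟙 i, by simp⟩
  | @insert a s ha ih =>
    obtain ⟨j, f, hf⟩ := ih (fun l hl => h l (Finset.mem_insert_of_mem hl))
    obtain ⟨j', f', hf'⟩ := exists_eq F i (Wl a) (x a) (y a) (h a (Finset.mem_insert_self a s))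
    obtain ⟨m, u, v, huv⟩ := IsFiltered.span f f'
    refine ⟨m, f ≫ u, ?_⟩
    intro l hl
    rcases Finset.mem_insert.mp hl with rfl | hl
    · rw [huv, map_comp_app_apply, hf', ← map_comp_app_apply]
    · rw [map_comp_app_apply, hf l hl, ← map_comp_app_apply]

lemma restrict_restrict {W1 W2 W3 : Opens X} (h12 : W1 ≤ W2) (h23 : W2 ≤ W3)
    (a : (P F).obj (op W3)) :
    (P F).map (homOfLE h12).op ((P F).map (homOfLE h23).op a)
      = (P F).map (homOfLE (h12.trans h23)).op a := by
  have e : (P F).map (homOfLE h23).op ≫ (P F).map (homOfLE h12).op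
      = (P F).map (homOfLE (h12.trans h23)).op := by
    rw [← Functor.map_comp, ← op_comp, homOfLE_comp]
  exact ConcreteCategory.congr_hom e a

/-- Separation: two elements of the colimit presheaf agreeing on an open cover are equal. -/
lemma sep [NoetherianSpace X] {W : Opens X} {L : Type} (U : L → Opens X)
    (hle : ∀ l, U l ≤ W) (hcov : (W : Set X) ⊆ ⋃ l, (U l : Set X))
    (a b : (P F).obj (op W))
    (h : ∀ l, (P F).map (homOfLE (hle l)).op a = (P F).map (homOfLE (hle l)).op b) :
    a = b := by
  classical
  obtain ⟨i, ra, rfl⟩ := exists_rep F W a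
  obtain ⟨i', rb, rfl⟩ := exists_rep F W b
  -- common stage
  set j0 := IsFiltered.max i i'
  set ra' := ((Fp F).map (IsFiltered.leftToMax i i')).app (op W) ra with hra'
  set rb' := ((Fp F).map (IsFiltered.rightToMax i i')).app (op W) rb with hrb'
  have ha : ιapp F j0 W ra' = ιapp F i W ra := ιapp_push F _ W ra
  have hb : ιapp F j0 W rb' = ιapp F i' W rb := ιapp_push F _ W rb
  -- finite subcover
  obtain ⟨t, ht⟩ := (NoetherianSpace.isCompact (W : Set X)).elim_finite_subcover
    (fun l => (U l : Set X)) (fun l => (U l).isOpen) hcov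
  -- restrictions agree in the colimit
  have hres : ∀ l ∈ t,
      ιapp F j0 (U l) ((F.obj j0).val.map (homOfLE (hle l)).op ra')
        = ιapp F j0 (U l) ((F.obj j0).val.map (homOfLE (hle l)).op rb') := by
    intro l _
    rw [← ιapp_natural, ← ιapp_natural, ha, hb]
    exact h l
  obtain ⟨j, f, hf⟩ := exists_eq_finset F t j0 U
    (fun l => (F.obj j0).val.map (homOfLE (hle l)).op ra')
    (fun l => (F.obj j0).val.map (homOfLE (hle l)).op rb') hres
  set sa := ((Fp F).map f).app (op W) ra' with hsa
  set sb := ((Fp F).map f).app (op W) rb' with hsb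
  have key : sa = sb := by
    apply TopCat.Sheaf.eq_of_locally_eq' (X := TopCat.of X)
      (F := (F.obj j : TopCat.Sheaf (ModuleCat k) (TopCat.of X)))
      (fun l : {l // l ∈ t} => U l) W (fun l => homOfLE (hle l)) ?_
    · intro l
      have nat : ∀ (z : (F.obj j0).val.obj (op W)),
          (F.obj j).val.map (homOfLE (hle l)).op (((Fp F).map f).app (op W) z)
            = ((Fp F).map f).app (op (U l)) ((F.obj j0).val.map (homOfLE (hle l)).op z) := by
        intro z
        exact (ConcreteCategory.congr_hom (((Fp F).map f).naturality (homOfLE (hle l)).op) z).symm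
      show (F.obj j).val.map (homOfLE (hle l)).op sa
          = (F.obj j).val.map (homOfLE (hle l)).op sb
      rw [hsa, hsb, nat, nat, hf l l.2]
    · intro w hw
      have hw' := ht hw
      simp only [Set.mem_iUnion] at hw'
      obtain ⟨l, hl, hwl⟩ := hw'
      exact Opens.mem_iSup.mpr ⟨⟨l, hl⟩, hwl⟩
  calc ιapp F i W ra = ιapp F j0 W ra' := ha.symm
    _ = ιapp F j W sa := (ιapp_push F f W ra').symm
    _ = ιapp F j W sb := by rw [key]
    _ = ιapp F j0 W rb' := ιapp_push F f W rb'
    _ = ιapp F i' W rb := hb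


lemma pres_hom_congr (Q : (Opens X)ᵒᵖ ⥤ ModuleCat k) {W1 W2 : Opens X} (f g : W1 ⟶ W2)
    (a : Q.obj (op W2)) : Q.map f.op a = Q.map g.op a := by rw [Subsingleton.elim f g]

lemma pres_res_res (Q : (Opens X)ᵒᵖ ⥤ ModuleCat k) {W1 W2 W3 : Opens X}
    (f : W1 ⟶ W2) (g : W2 ⟶ W3) (a : Q.obj (op W3)) :
    Q.map f.op (Q.map g.op a) = Q.map (f ≫ g).op a := by
  have e : Q.map g.op ≫ Q.map f.op = Q.map (f ≫ g).op := by rw [← Q.map_comp, ← op_comp]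
  exact ConcreteCategory.congr_hom e a

lemma isSheafP [NoetherianSpace X] :
    Presheaf.IsSheaf (Opens.grothendieckTopology X) (P F) := by
  classical
  suffices h : TopCat.Presheaf.IsSheaf (X := TopCat.of X) (P F) from h
  rw [TopCat.Presheaf.isSheaf_iff_isSheafUniqueGluing]
  intro L U₀ sf hcompat
  let U : L → Opens X := U₀
  -- finite subcover of `iSup U`
  obtain ⟨t, ht⟩ := (NoetherianSpace.isCompact ((iSup U : Opens X) : Set X)).elim_finite_subcover
    (fun l => (U l : Set X)) (fun l => (U l).isOpen)
    (by rw [Opens.coe_iSup])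
  -- representatives of the finitely many relevant sections
  choose iIdx r hr using fun l : {l // l ∈ t} => exists_rep F (U l) (sf l)
  -- push them to a common stage `S`
  obtain ⟨S, hS⟩ := IsFiltered.sup_objs_exists (Finset.image iIdx Finset.univ)
  have arr : ∀ l : {l // l ∈ t}, iIdx l ⟶ S := fun l =>
    (hS (Finset.mem_image_of_mem _ (Finset.mem_univ l))).some
  set r' : ∀ l : {l // l ∈ t}, (F.obj S).val.obj (op (U l)) :=
    fun l => ((Fp F).map (arr l)).app (op (U l)) (r l) with hr'def
  have hr' : ∀ l : {l // l ∈ t}, ιapp F S (U l) (r' l) = sf l := fun l =>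
    (ιapp_push F (arr l) _ (r l)).trans (hr l)
  -- make the finitely many representatives genuinely compatible at a stage `j`
  have hpair : ∀ p : {l // l ∈ t} × {l // l ∈ t},
      ιapp F S (U p.1 ⊓ U p.2) ((F.obj S).val.map (homOfLE inf_le_left).op (r' p.1))
        = ιapp F S (U p.1 ⊓ U p.2) ((F.obj S).val.map (homOfLE inf_le_right).op (r' p.2)) := by
    intro p
    rw [← ιapp_natural, ← ιapp_natural, hr' p.1, hr' p.2]
    exact hcompat p.1 p.2
  obtain ⟨j, g, hg⟩ := exists_eq_finset F Finset.univ S (fun p => U p.1 ⊓ U p.2)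
    (fun p => (F.obj S).val.map (homOfLE inf_le_left).op (r' p.1))
    (fun p => (F.obj S).val.map (homOfLE inf_le_right).op (r' p.2))
    (fun p _ => hpair p)
  set r'' : ∀ l : {l // l ∈ t}, (F.obj j).val.obj (op (U l)) :=
    fun l => ((Fp F).map g).app (op (U l)) (r' l) with hr''def
  have hr'' : ∀ l : {l // l ∈ t}, ιapp F j (U l) (r'' l) = sf l := fun l =>
    (ιapp_push F g _ (r' l)).trans (hr' l)
  have natg : ∀ {W1 W2 : Opens X} (h12 : W1 ⟶ W2) (z : (F.obj S).val.obj (op W2)),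
      (F.obj j).val.map h12.op (((Fp F).map g).app (op W2) z)
        = ((Fp F).map g).app (op W1) ((F.obj S).val.map h12.op z) := fun h12 z =>
    (ConcreteCategory.congr_hom (((Fp F).map g).naturality h12.op) z).symm
  -- glue at stage `j`
  have hcov' : iSup U ≤ iSup (fun l : {l // l ∈ t} => U l) := by
    intro w hw
    have hw' := ht hw
    simp only [Set.mem_iUnion] at hw'
    obtain ⟨l, hl, hwl⟩ := hw'
    exact Opens.mem_iSup.mpr ⟨⟨l, hl⟩, hwl⟩
  have hcomp'' : TopCat.Presheaf.IsCompatible (X := TopCat.of X)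
      (F.obj j : TopCat.Sheaf (ModuleCat k) (TopCat.of X)).val
      (fun l : {l // l ∈ t} => U₀ l) r'' := by
    intro l m
    have h1 := hg (l, m) (Finset.mem_univ _)
    show (F.obj j).val.map (homOfLE (inf_le_left : U l ⊓ U m ≤ U l)).op (r'' l)
        = (F.obj j).val.map (homOfLE (inf_le_right : U l ⊓ U m ≤ U m)).op (r'' m)
    rw [hr''def]
    rw [natg, natg]
    exact h1
  obtain ⟨s0, hs0, -⟩ := TopCat.Sheaf.existsUnique_gluing' (X := TopCat.of X)
    (F := (F.obj j : TopCat.Sheaf (ModuleCat k) (TopCat.of X)))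
    (fun l : {l // l ∈ t} => U₀ l) (iSup U) (fun l => homOfLE (le_iSup U l)) hcov' r'' hcomp''
  set s : (P F).obj (op (iSup U)) := ιapp F j (iSup U) s0 with hsdef
  have hglue : ∀ l : L, (P F).map (Opens.leSupr U₀ l).op s = sf l := by
    intro l0
    apply sep F (W := U l0) (fun m : {l // l ∈ t} => U l0 ⊓ U m)
      (fun m => inf_le_left)
      (by
        intro w hw
        have hw' := ht (le_iSup U l0 hw)
        simp only [Set.mem_iUnion] at hw'
        obtain ⟨l, hl, hwl⟩ := hw'
        exact Set.mem_iUnion.mpr ⟨⟨l, hl⟩, ⟨hw, hwl⟩⟩)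
    intro m
    rw [pres_res_res (P F) (homOfLE inf_le_left) (Opens.leSupr U₀ l0) s]
    rw [pres_hom_congr (P F) (homOfLE inf_le_left ≫ Opens.leSupr U₀ l0)
      (homOfLE (inf_le_right : U l0 ⊓ U m ≤ U m) ≫ homOfLE (le_iSup U m)) s]
    rw [← pres_res_res (P F) (homOfLE inf_le_right) (homOfLE (le_iSup U m)) s]
    have e1 : (P F).map (homOfLE (le_iSup U m)).op s = sf m := by
      rw [hsdef, ιapp_natural]
      rw [show (F.obj j).val.map (homOfLE (le_iSup U m)).op s0 = r'' m from hs0 m]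
      exact hr'' m
    rw [e1]
    exact (hcompat l0 m).symm
  refine ⟨s, hglue, ?_⟩
  intro s' hs'
  apply sep F (W := iSup U) U (fun l => le_iSup U l) (by rw [Opens.coe_iSup])
  intro l
  exact (hs' l).trans (hglue l).symm

end Stmt9Aux


/-- The sections functor over an open set `V` on sheaves of `k`-modules. -/
noncomputable def sectionsOver (k : Type) [CommRing k] {X : Type} [TopologicalSpace X]
    (V : Opens X) :
    Sheaf (Opens.grothendieckTopology X) (ModuleCat k) ⥤ ModuleCat k :=
  sheafToPresheaf _ _ ⋙ (evaluation (Opens X)ᵒᵖ (ModuleCat k)).obj (op V)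

/-- On a Noetherian space, sections over any open set commute with filtered colimits of
sheaves: `colim_i Γ(V;F_i) ≅ Γ(V; colim_i F_i)`. -/
theorem stmt_9 {k : Type} [CommRing k] {X : Type} [TopologicalSpace X]
    [TopologicalSpace.NoetherianSpace X] (V : Opens X)
    {I : Type} [SmallCategory I] [IsFiltered I]
    (F : I ⥤ Sheaf (Opens.grothendieckTopology X) (ModuleCat k)) :
    IsIso (colimit.post F (sectionsOver k V)) := by
  haveI hrefl := fullyFaithful_reflectsColimits
    (sheafToPresheaf (Opens.grothendieckTopology X) (ModuleCat k))
  set c : Cocone F :=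
    { pt := ⟨Stmt9Aux.P F, Stmt9Aux.isSheafP F⟩
      ι :=
        { app := fun i => ⟨colimit.ι (Stmt9Aux.Fp F) i⟩
          naturality := fun i j f => by
            apply Sheaf.hom_ext
            simpa using colimit.w (Stmt9Aux.Fp F) f } } with hc
  have hmapped : IsColimit ((sheafToPresheaf _ _).mapCocone c) :=
    (colimit.isColimit (Stmt9Aux.Fp F)).ofIsoColimit
      (Cocones.ext (Iso.refl _) (fun i => by simp [hc]; rfl))
  have hcolim : IsColimit c := isColimitOfReflects (sheafToPresheaf _ _) hmapped
  have hev : IsColimit (((evaluation (Opens X)ᵒᵖ (ModuleCat k)).obj (op V)).mapCocone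
      ((sheafToPresheaf _ _).mapCocone c)) :=
    isColimitOfPreserves _ hmapped
  haveI : PreservesColimit F (sectionsOver k V) :=
    preservesColimit_of_preserves_colimit_cocone hcolim hev
  infer_instance
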